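/- Let P be a polynomial of degree n with all zeros in the closed unit disk and p a polynomial of degree at most n with |p(z)| ≤ |P(z)| on the unit circle. Then for every a in the closed unit disk and every z with |z| ≥ 1, |(1+az)p'(z) − n a p(z)| ≤ |(1+az)P'(z) − n a P(z)|. -/

import Mathlib

open Polynomial Metric Set ComplexConjugate

noncomputable def maxSphere (P : Polynomial ℂ) : ℝ :=
  sSup ((fun w => ‖P.eval w‖) '' sphere (0:ℂ) 1)

noncomputable def minSphere (P : Polynomial ℂ) : ℝ :=
  sInf ((fun w => ‖P.eval w‖) '' sphere (0:ℂ) 1)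

noncomputable def Complex.abs : AbsoluteValue ℂ ℝ where
  toFun := fun z => ‖z‖
  map_mul' := norm_mul
  nonneg' := norm_nonneg
  eq_zero' := fun _ => norm_eq_zero
  add_le' := norm_add_le

theorem Complex.norm_eq_abs (z : ℂ) : ‖z‖ = Complex.abs z := rfl

theorem Complex.abs_apply (z : ℂ) : Complex.abs z = Real.sqrt (Complex.normSq z) := Complex.norm_def z

theorem Complex.sq_abs (z : ℂ) : Complex.abs z ^ 2 = Complex.normSq z := Complex.sq_norm z

@[simp]
theorem Complex.abs_ofReal (r : ℝ) : Complex.abs (r : ℂ) = |r| := by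
  rw [← Complex.norm_eq_abs, Complex.norm_real, Real.norm_eq_abs]

@[simp]
theorem Complex.abs_conj (z : ℂ) : Complex.abs (conj z) = Complex.abs z := Complex.norm_conj z

theorem Complex.abs_re_le_abs (z : ℂ) : |z.re| ≤ Complex.abs z := Complex.abs_re_le_norm z

theorem Complex.continuous_abs : Continuous (fun z : ℂ => Complex.abs z) := continuous_norm

private lemma absle {u v : ℂ} (h : Complex.normSq u ≤ Complex.normSq v) :
    Complex.abs u ≤ Complex.abs v := by
  rw [Complex.abs_apply, Complex.abs_apply]; exact Real.sqrt_le_sqrt h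

private lemma nsq_le_one {u : ℂ} (h : Complex.abs u ≤ 1) : Complex.normSq u ≤ 1 := by
  have := Complex.sq_abs u
  nlinarith [Complex.abs.nonneg u]

private lemma lemA {a r z : ℂ} (ha : Complex.abs a ≤ 1) (hr : Complex.abs r ≤ 1)
    (hz : 1 < Complex.abs z) :
    0 ≤ ((z + conj a) * ((1 + a * r) * conj (z - r))).re ∧
      (((z + conj a) * ((1 + a * r) * conj (z - r))).re = 0 → 1 + a * r = 0) := by
  have hna : Complex.normSq a ≤ 1 := nsq_le_one ha
  have hnr : Complex.normSq r ≤ 1 := nsq_le_one hr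
  have hnz : 1 < Complex.normSq z := by
    have := Complex.sq_abs z
    nlinarith [Complex.abs.nonneg z]
  set E : ℂ := (z + conj a) * ((1 + a * r) * conj (z - r)) with hEdef
  set T : ℂ := (z + conj a) * ((a * z + 1) * (((conj z) * r - 1) * conj (z - r))) with hTdef
  set A : ℝ := Complex.normSq (conj z + a) * Complex.normSq (z - r) with hAdef
  have hA : (A : ℂ) = ((conj z + a) * (z + conj a)) * ((z - r) * (conj z - conj r)) := by
    rw [hAdef]
    push_cast
    rw [← Complex.mul_conj (conj z + a), ← Complex.mul_conj (z - r)]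
    simp only [map_add, map_sub, Complex.conj_conj]
  have hmain : E * (z * conj z - 1) = (A : ℂ) + T := by
    rw [hA, hEdef, hTdef]
    simp only [map_sub]
    ring
  have h1 : Complex.abs (a * z + 1) ≤ Complex.abs (conj z + a) := by
    apply absle
    have : Complex.normSq (conj z + a) - Complex.normSq (a * z + 1)
        = (1 - Complex.normSq a) * (Complex.normSq z - 1) := by
      simp only [Complex.normSq_apply, Complex.add_re, Complex.add_im, Complex.mul_re,
        Complex.mul_im, Complex.conj_re, Complex.conj_im, Complex.one_re, Complex.one_im]
      ring
    nlinarith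
  have h2 : Complex.abs ((conj z) * r - 1) ≤ Complex.abs (z - r) := by
    apply absle
    have : Complex.normSq (z - r) - Complex.normSq ((conj z) * r - 1)
        = (Complex.normSq z - 1) * (1 - Complex.normSq r) := by
      simp only [Complex.normSq_apply, Complex.sub_re, Complex.sub_im, Complex.mul_re,
        Complex.mul_im, Complex.conj_re, Complex.conj_im, Complex.one_re, Complex.one_im]
      ring
    nlinarith
  have h0 : (0:ℝ) ≤ Complex.abs (conj z + a) := Complex.abs.nonneg _
  have h0' : (0:ℝ) ≤ Complex.abs (z - r) := Complex.abs.nonneg _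
  have h0'' : (0:ℝ) ≤ Complex.abs ((conj z) * r - 1) := Complex.abs.nonneg _
  have h0''' : (0:ℝ) ≤ Complex.abs (a * z + 1) := Complex.abs.nonneg _
  have habsT : Complex.abs T ≤ A := by
    rw [hTdef, hAdef]
    rw [map_mul, map_mul, map_mul]
    have e1 : Complex.abs (z + conj a) = Complex.abs (conj z + a) := by
      rw [← Complex.abs_conj (z + conj a)]; simp [map_add]
    have e2 : Complex.abs (conj (z - r)) = Complex.abs (z - r) := Complex.abs_conj _
    rw [e1, e2, ← Complex.sq_abs (conj z + a), ← Complex.sq_abs (z - r)]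
    have hbc : Complex.abs (a * z + 1) * Complex.abs ((conj z) * r - 1)
        ≤ Complex.abs (conj z + a) * Complex.abs (z - r) :=
      mul_le_mul h1 h2 h0'' h0
    nlinarith [mul_le_mul_of_nonneg_left hbc (mul_nonneg h0 h0')]
  have hre : E.re * (Complex.normSq z - 1) = A + T.re := by
    have h := congrArg Complex.re hmain
    rw [show z * conj z - 1 = ((Complex.normSq z - 1 : ℝ) : ℂ) by
        rw [Complex.mul_conj]; push_cast; ring] at h
    rw [mul_comm E _, Complex.re_ofReal_mul, Complex.add_re, Complex.ofReal_re] at h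
    linarith [h]
  have hA0 : 0 ≤ A := by
    rw [hAdef]; exact mul_nonneg (Complex.normSq_nonneg _) (Complex.normSq_nonneg _)
  have hTre : -A ≤ T.re := by
    have h3 := Complex.abs_re_le_abs T
    have h4 := neg_abs_le T.re
    linarith [habsT]
  have hpos : 0 < Complex.normSq z - 1 := by linarith
  constructor
  · by_contra hneg
    push_neg at hneg
    nlinarith [mul_pos (neg_pos.mpr hneg) hpos]
  · intro hE0
    have hTA : T.re = -A := by nlinarith [hre]
    have habsA : Complex.abs T = A := by
      have h3 := Complex.abs_re_le_abs T
      rw [hTA, abs_neg, abs_of_nonneg hA0] at h3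
      linarith [habsT]
    have hTim : T.im = 0 := by
      have hns : Complex.normSq T = T.re * T.re + T.im * T.im := Complex.normSq_apply T
      have hns2 : Complex.normSq T = A * A := by
        rw [← Complex.sq_abs, habsA]; ring
      nlinarith [hTA]
    have hTeq : T = -(A : ℂ) := by
      apply Complex.ext
      · simp [hTA]
      · simp [hTim]
    have hzr : z - r ≠ 0 := by
      intro h
      rw [sub_eq_zero] at h
      rw [h] at hz
      linarith
    have hfac : (z + conj a) * (conj (z - r) * ((1 + a * r) * (z * conj z - 1))) = 0 := by
      have : (z + conj a) * (conj (z - r) * ((1 + a * r) * (z * conj z - 1)))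
          = T + (A : ℂ) := by
        rw [hTdef, hA]
        simp only [map_sub]
        ring
      rw [this, hTeq]
      ring
    have f1 : z + conj a ≠ 0 := by
      intro h
      have : z = -conj a := by linear_combination h
      rw [this] at hz
      simp only [AbsoluteValue.map_neg, Complex.abs_conj] at hz
      linarith
    have f2 : conj (z - r) ≠ 0 := by
      rw [map_sub, sub_ne_zero]
      intro h
      exact hzr (sub_eq_zero.mpr (by simpa using congrArg (starRingEnd ℂ) h))
    have f3 : z * conj z - 1 ≠ 0 := by
      rw [Complex.mul_conj]
      intro h
      have h6 := congrArg Complex.re h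
      simp only [Complex.sub_re, Complex.ofReal_re, Complex.one_re, Complex.zero_re] at h6
      linarith
    rcases mul_eq_zero.mp hfac with h | h
    · exact absurd h f1
    rcases mul_eq_zero.mp h with h | h
    · exact absurd h f2
    rcases mul_eq_zero.mp h with h | h
    · exact h
    · exact absurd h f3

noncomputable def Sop (m : ℕ) (a z : ℂ) (q : Polynomial ℂ) : ℂ :=
  (1 + a * z) * (derivative q).eval z - (m : ℂ) * a * q.eval z

private lemma Sfact (m : ℕ) (a z r : ℂ) (q : Polynomial ℂ) :
    Sop (m + 1) a z ((X - C r) * q) = (z - r) * Sop m a z q + (1 + a * r) * q.eval z := by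
  simp only [Sop, derivative_mul, derivative_sub, derivative_X, derivative_C, eval_add, eval_mul,
    eval_sub, eval_X, eval_C, eval_one, eval_mul, Nat.cast_add, Nat.cast_one, sub_zero, one_mul]
  ring

private lemma Sfact' (m : ℕ) (a z r : ℂ) (q : Polynomial ℂ) (hr : 1 + a * r = 0) :
    Sop (m + 1) a z ((X - C r) * q) = (z - r) * Sop m a z q := by
  rw [Sfact, hr]; ring

private lemma evalprod_eq (M : Multiset ℂ) (c z : ℂ) :
    (C c * (M.map (fun r => X - C r)).prod).eval z = c * (M.map (fun r => z - r)).prod := by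
  rw [eval_mul, eval_C, eval_multiset_prod, Multiset.map_map]
  simp [Function.comp]

private lemma evalprod_ne {M : Multiset ℂ} {c z : ℂ} (hc : c ≠ 0)
    (hM : ∀ r ∈ M, Complex.abs r ≤ 1) (hz : 1 < Complex.abs z) :
    (C c * (M.map (fun r => X - C r)).prod).eval z ≠ 0 := by
  rw [evalprod_eq]
  apply mul_ne_zero hc
  apply Multiset.prod_ne_zero
  intro h0
  rcases Multiset.mem_map.mp h0 with ⟨r, hrM, hr0⟩
  rw [sub_eq_zero] at hr0
  rw [hr0] at hz
  exact absurd (hM r hrM) (by linarith)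

private lemma claimC (a z : ℂ) (ha : Complex.abs a ≤ 1) (hz : 1 < Complex.abs z)
    (M : Multiset ℂ) : ∀ (c : ℂ), c ≠ 0 → (∀ r ∈ M, Complex.abs r ≤ 1) →
    0 ≤ ((z + conj a) * (Sop M.card a z (C c * (M.map (fun r => X - C r)).prod)
          * conj ((C c * (M.map (fun r => X - C r)).prod).eval z))).re ∧
      (((z + conj a) * (Sop M.card a z (C c * (M.map (fun r => X - C r)).prod)
          * conj ((C c * (M.map (fun r => X - C r)).prod).eval z))).re = 0 →
        ∀ r ∈ M, 1 + a * r = 0) := by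
  induction M using Multiset.induction_on with
  | empty =>
    intro c hc _
    constructor
    · simp [Sop]
    · intro _ r hr
      exact absurd hr (by simp)
  | cons r M' ih =>
    intro c hc hM
    have hr1 : Complex.abs r ≤ 1 := hM r (Multiset.mem_cons_self r M')
    have hM' : ∀ s ∈ M', Complex.abs s ≤ 1 := fun s hs => hM s (Multiset.mem_cons_of_mem hs)
    set q : Polynomial ℂ := C c * (M'.map (fun r => X - C r)).prod with hqdef
    have hrw : C c * (((r ::ₘ M').map (fun r => X - C r)).prod) = (X - C r) * q := by
      rw [Multiset.map_cons, Multiset.prod_cons, hqdef]; ring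
    have hcard : (r ::ₘ M').card = M'.card + 1 := Multiset.card_cons r M'
    have hQne : q.eval z ≠ 0 := evalprod_ne hc hM' hz
    have hzr : z - r ≠ 0 := by
      intro h
      rw [sub_eq_zero] at h
      rw [h] at hz
      linarith
    obtain ⟨ihpos, iheq⟩ := ih c hc hM'
    obtain ⟨Apos, Aeq⟩ := lemA ha hr1 hz
    -- decomposition of the relevant real part
    have hdecomp : ((z + conj a) * (Sop (r ::ₘ M').card a z (C c * (((r ::ₘ M').map (fun r => X - C r)).prod))
          * conj ((C c * (((r ::ₘ M').map (fun r => X - C r)).prod)).eval z))).re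
        = Complex.normSq (z - r) * ((z + conj a) * (Sop M'.card a z q * conj (q.eval z))).re
          + Complex.normSq (q.eval z) * ((z + conj a) * ((1 + a * r) * conj (z - r))).re := by
      rw [hcard, hrw, Sfact]
      have hev : ((X - C r) * q).eval z = (z - r) * q.eval z := by simp
      rw [hev]
      have : (z + conj a) * (((z - r) * Sop M'.card a z q + (1 + a * r) * q.eval z)
            * conj ((z - r) * q.eval z))
          = ((Complex.normSq (z - r) : ℝ) : ℂ) * ((z + conj a) * (Sop M'.card a z q * conj (q.eval z)))
            + ((Complex.normSq (q.eval z) : ℝ) : ℂ) * ((z + conj a) * ((1 + a * r) * conj (z - r))) := by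
        rw [← Complex.mul_conj (z - r), ← Complex.mul_conj (q.eval z)]
        simp only [map_mul]
        ring
      rw [this, Complex.add_re, Complex.re_ofReal_mul, Complex.re_ofReal_mul]
    have hn1 : 0 < Complex.normSq (z - r) := by
      rwa [Complex.normSq_pos]
    have hn2 : 0 < Complex.normSq (q.eval z) := by
      rwa [Complex.normSq_pos]
    constructor
    · rw [hdecomp]
      have := mul_nonneg (le_of_lt hn1) ihpos
      have := mul_nonneg (le_of_lt hn2) Apos
      linarith
    · intro h0
      rw [hdecomp] at h0
      have hx : Complex.normSq (z - r) * ((z + conj a) * (Sop M'.card a z q * conj (q.eval z))).re = 0 := by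
        nlinarith [mul_nonneg (le_of_lt hn1) ihpos, mul_nonneg (le_of_lt hn2) Apos]
      have hy : Complex.normSq (q.eval z) * ((z + conj a) * ((1 + a * r) * conj (z - r))).re = 0 := by
        nlinarith [mul_nonneg (le_of_lt hn1) ihpos, mul_nonneg (le_of_lt hn2) Apos]
      have t1 : ((z + conj a) * (Sop M'.card a z q * conj (q.eval z))).re = 0 := by
        rcases mul_eq_zero.mp hx with h | h
        · exact absurd h (ne_of_gt hn1)
        · exact h
      have t2 : ((z + conj a) * ((1 + a * r) * conj (z - r))).re = 0 := by
        rcases mul_eq_zero.mp hy with h | h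
        · exact absurd h (ne_of_gt hn2)
        · exact h
      intro s hs
      rcases Multiset.mem_cons.mp hs with hs | hs
      · rw [hs]; exact Aeq t2
      · exact iheq t1 s hs

private lemma shrink_factor {z r : ℂ} {t : ℝ} (hz : Complex.abs z = 1) (hr : Complex.abs r ≤ 1)
    (ht0 : 0 < t) (ht1 : t ≤ 1) : t * Complex.abs (z - r) ≤ Complex.abs (z - (t : ℂ) * r) := by
  have hz2 : z.re ^ 2 + z.im ^ 2 = 1 := by
    have := Complex.sq_abs z
    rw [hz] at this
    simp [Complex.normSq_apply] at this
    nlinarith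
  have hr2 : r.re ^ 2 + r.im ^ 2 ≤ 1 := by
    have h1 := Complex.sq_abs r
    rw [Complex.normSq_apply] at h1
    nlinarith [Complex.abs.nonneg r]
  have hS : z.re * r.re + z.im * r.im ≤ 1 := by
    nlinarith [sq_nonneg (z.re * r.im - z.im * r.re), sq_nonneg (z.re * r.re + z.im * r.im - 1),
      sq_nonneg (z.re * r.re + z.im * r.im + 1)]
  have key : t ^ 2 * Complex.normSq (z - r) ≤ Complex.normSq (z - (t : ℂ) * r) := by
    simp only [Complex.normSq_apply, Complex.sub_re, Complex.sub_im, Complex.mul_re,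
      Complex.mul_im, Complex.ofReal_re, Complex.ofReal_im]
    nlinarith [mul_nonneg (sub_nonneg.mpr ht1) (by nlinarith : (0:ℝ) ≤ 1 + t - 2 * t * (z.re * r.re + z.im * r.im))]
  have := Real.sqrt_le_sqrt key
  rwa [Real.sqrt_mul (sq_nonneg t), Real.sqrt_sq ht0.le, ← Complex.abs_apply,
    ← Complex.abs_apply] at this

private lemma shrink_prod {t : ℝ} (ht0 : 0 < t) (ht1 : t ≤ 1) {z : ℂ} (hz : Complex.abs z = 1)
    (M : Multiset ℂ) (hM : ∀ r ∈ M, Complex.abs r ≤ 1) :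
    t ^ M.card * Complex.abs ((M.map (fun r => z - r)).prod)
      ≤ Complex.abs ((M.map (fun r => z - (t : ℂ) * r)).prod) := by
  induction M using Multiset.induction_on with
  | empty => simp
  | cons r M' ih =>
    have hr1 : Complex.abs r ≤ 1 := hM r (Multiset.mem_cons_self r M')
    have hM' : ∀ s ∈ M', Complex.abs s ≤ 1 := fun s hs => hM s (Multiset.mem_cons_of_mem hs)
    simp only [Multiset.map_cons, Multiset.prod_cons, Multiset.card_cons, map_mul]
    have h1 := shrink_factor hz hr1 ht0 ht1
    have h2 := ih hM'
    calc t ^ (M'.card + 1) * (Complex.abs (z - r) * Complex.abs ((M'.map (fun r => z - r)).prod))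
        = (t * Complex.abs (z - r)) * (t ^ M'.card * Complex.abs ((M'.map (fun r => z - r)).prod)) := by
          ring
      _ ≤ Complex.abs (z - (t : ℂ) * r) * Complex.abs ((M'.map (fun r => z - (t : ℂ) * r)).prod) := by
          apply mul_le_mul h1 h2 (by positivity) (Complex.abs.nonneg _)

private lemma cont_aux (z : ℂ) (M : Multiset ℂ) :
    Continuous fun t : ℝ => ((M.map (fun r => z - (t : ℂ) * r)).prod) := by
  induction M using Multiset.induction_on with
  | empty => simpa using continuous_const
  | cons r M' ih =>
    simp only [Multiset.map_cons, Multiset.prod_cons]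
    exact (continuous_const.sub (Complex.continuous_ofReal.mul continuous_const)).mul ih

private lemma prod_pull (M : Multiset ℂ) (w : ℂ) (g : ℂ → ℂ) :
    (M.map (fun r => w * g r)).prod = w ^ M.card * (M.map g).prod := by
  rw [Multiset.prod_map_mul, Multiset.map_const', Multiset.prod_replicate]

private lemma cont_aux2 (M : Multiset ℂ) (f g : ℂ → ℂ) :
    Continuous fun t : ℝ => ((M.map (fun r => f r - (t : ℂ) * g r)).prod) := by
  induction M using Multiset.induction_on with
  | empty => simpa using continuous_const
  | cons r M' ih =>
    simp only [Multiset.map_cons, Multiset.prod_cons]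
    exact (continuous_const.sub (Complex.continuous_ofReal.mul continuous_const)).mul ih

private noncomputable def reflP (n : ℕ) (p : Polynomial ℂ) : Polynomial ℂ :=
  ∑ i ∈ Finset.range (n + 1), C (p.coeff i) * X ^ (n - i)

private lemma reflP_eval {n : ℕ} {p : Polynomial ℂ} (hp : p.natDegree ≤ n) {w : ℂ} (hw : w ≠ 0) :
    (reflP n p).eval w = w ^ n * p.eval w⁻¹ := by
  rw [reflP, eval_finset_sum, Polynomial.eval_eq_sum_range' (lt_of_le_of_lt hp (Nat.lt_succ_self n)) w⁻¹,
    Finset.mul_sum]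
  apply Finset.sum_congr rfl
  intro i hi
  have hin : i ≤ n := Nat.lt_succ_iff.mp (Finset.mem_range.mp hi)
  have hsplit : w ^ n = w ^ (n - i) * w ^ i := by
    rw [← pow_add]
    congr 1
    omega
  rw [eval_mul, eval_C, eval_pow, eval_X, hsplit, inv_pow]
  field_simp

private lemma reflP_eval_zero (n : ℕ) (p : Polynomial ℂ) : (reflP n p).eval 0 = p.coeff n := by
  rw [reflP, eval_finset_sum]
  rw [Finset.sum_eq_single n]
  · simp
  · intro i hi hne
    have hin : i < n := by
      have := Nat.lt_succ_iff.mp (Finset.mem_range.mp hi)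
      omega
    simp [Nat.sub_ne_zero_of_lt hin, zero_pow]
  · intro h
    exact absurd (Finset.self_mem_range_succ n) h

private noncomputable def QQ (c : ℂ) (M : Multiset ℂ) (t : ℝ) : Polynomial ℂ :=
  C c * (M.map (fun r => 1 - C ((t : ℂ) * r) * X)).prod

private lemma QQ_eval (c : ℂ) (M : Multiset ℂ) (t : ℝ) (w : ℂ) :
    (QQ c M t).eval w = c * (M.map (fun r => 1 - (t : ℂ) * r * w)).prod := by
  rw [QQ, eval_mul, eval_C, eval_multiset_prod, Multiset.map_map]
  simp [Function.comp]

private lemma QQ_eval_rel (c : ℂ) (M : Multiset ℂ) (t : ℝ) {w : ℂ} (hw : w ≠ 0) :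
    (QQ c M t).eval w = w ^ M.card * (c * (M.map (fun r => w⁻¹ - (t : ℂ) * r)).prod) := by
  rw [QQ_eval]
  have : M.map (fun r => 1 - (t : ℂ) * r * w) = M.map (fun r => w * (w⁻¹ - (t : ℂ) * r)) := by
    apply Multiset.map_congr rfl
    intro r _
    field_simp
  rw [this, prod_pull]
  ring

private lemma QQ_ne {c : ℂ} (hc : c ≠ 0) {M : Multiset ℂ} (hM : ∀ r ∈ M, Complex.abs r ≤ 1)
    {t : ℝ} (ht0 : 0 < t) (ht1 : t < 1) {w : ℂ} (hw : Complex.abs w ≤ 1) :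
    (QQ c M t).eval w ≠ 0 := by
  rw [QQ_eval]
  apply mul_ne_zero hc
  apply Multiset.prod_ne_zero
  intro h0
  rcases Multiset.mem_map.mp h0 with ⟨r, hrM, hr0⟩
  have h1 : (1 : ℂ) = (t : ℂ) * r * w := sub_eq_zero.mp hr0
  have := congrArg Complex.abs h1
  rw [map_one, map_mul, map_mul, Complex.abs_ofReal, abs_of_pos ht0] at this
  have hr1 : Complex.abs r ≤ 1 := hM r hrM
  have h2 : Complex.abs r * Complex.abs w ≤ 1 :=
    mul_le_one₀ hr1 (Complex.abs.nonneg w) hw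
  nlinarith [mul_le_mul_of_nonneg_left h2 ht0.le]

private lemma ext_ineq (n : ℕ) (P p : Polynomial ℂ) (hP : P.natDegree = n) (hP0 : P ≠ 0)
    (hzeros : ∀ z : ℂ, P.eval z = 0 → Complex.abs z ≤ 1) (hp : p.natDegree ≤ n)
    (hle : ∀ z : ℂ, Complex.abs z = 1 → Complex.abs (p.eval z) ≤ Complex.abs (P.eval z)) :
    (∀ z : ℂ, 1 < Complex.abs z → Complex.abs (p.eval z) ≤ Complex.abs (P.eval z)) ∧
      Complex.abs (p.coeff n) ≤ Complex.abs (P.coeff n) := by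
  set c := P.leadingCoeff with hcdef
  set M := P.roots with hMdef
  have hc : c ≠ 0 := leadingCoeff_ne_zero.mpr hP0
  have hcard : M.card = n := by
    rw [← hP]
    exact splits_iff_card_roots.mp (IsAlgClosed.splits P)
  have hfact : C c * (M.map (fun r => X - C r)).prod = P :=
    C_leadingCoeff_mul_prod_multiset_X_sub_C (by rw [hcard, hP])
  have hroots : ∀ r ∈ M, Complex.abs r ≤ 1 := by
    intro r hr
    exact hzeros r ((mem_roots'.mp hr).2)
  have hPeval : ∀ w : ℂ, P.eval w = c * (M.map (fun r => w - r)).prod := by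
    intro w
    conv_lhs => rw [← hfact]
    rw [evalprod_eq]
  -- Step 1: for each t ∈ (0,1), max modulus bound on the closed unit disc
  have hstep : ∀ t : ℝ, 0 < t → t < 1 → ∀ w : ℂ, Complex.abs w ≤ 1 →
      t ^ n * Complex.abs ((reflP n p).eval w) ≤ Complex.abs ((QQ c M t).eval w) := by
    intro t ht0 ht1
    have hbdry : ∀ w : ℂ, Complex.abs w = 1 →
        t ^ n * Complex.abs ((reflP n p).eval w) ≤ Complex.abs ((QQ c M t).eval w) := by
      intro w hw
      have hw0 : w ≠ 0 := by
        intro h; rw [h] at hw; simp at hw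
      have hwinv : Complex.abs w⁻¹ = 1 := by rw [map_inv₀, hw]; norm_num
      have e1 : Complex.abs ((reflP n p).eval w) = Complex.abs (p.eval w⁻¹) := by
        rw [reflP_eval hp hw0, map_mul, map_pow, hw, one_pow, one_mul]
      have e2 : Complex.abs ((QQ c M t).eval w)
          = Complex.abs c * Complex.abs ((M.map (fun r => w⁻¹ - (t : ℂ) * r)).prod) := by
        rw [QQ_eval_rel c M t hw0, map_mul, map_mul, map_pow, hw, one_pow, one_mul]
      have e3 : Complex.abs (P.eval w⁻¹)
          = Complex.abs c * Complex.abs ((M.map (fun r => w⁻¹ - r)).prod) := by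
        rw [hPeval, map_mul]
      have h4 := shrink_prod ht0 ht1.le hwinv M hroots
      rw [hcard] at h4
      have h5 := hle w⁻¹ hwinv
      rw [e1, e2]
      calc t ^ n * Complex.abs (p.eval w⁻¹) ≤ t ^ n * Complex.abs (P.eval w⁻¹) := by
            apply mul_le_mul_of_nonneg_left h5 (by positivity)
        _ = Complex.abs c * (t ^ n * Complex.abs ((M.map (fun r => w⁻¹ - r)).prod)) := by
            rw [e3]; ring
        _ ≤ Complex.abs c * Complex.abs ((M.map (fun r => w⁻¹ - (t : ℂ) * r)).prod) := by
            apply mul_le_mul_of_nonneg_left h4 (Complex.abs.nonneg c)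
    intro w hw
    set f := fun w : ℂ => ((t : ℂ)) ^ n * (reflP n p).eval w / (QQ c M t).eval w with hfdef
    have hdenom : ∀ u : ℂ, u ∈ closedBall (0 : ℂ) 1 → (QQ c M t).eval u ≠ 0 := by
      intro u hu
      rw [mem_closedBall_zero_iff] at hu
      exact QQ_ne hc hroots ht0 ht1 hu
    have hdiff : DifferentiableOn ℂ f (closedBall (0 : ℂ) 1) := by
      apply DifferentiableOn.div
      · exact (((reflP n p).differentiable).const_mul ((t : ℂ) ^ n)).differentiableOn
      · exact (QQ c M t).differentiable.differentiableOn
      · exact hdenom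
    have hd : DiffContOnCl ℂ f (ball (0 : ℂ) 1) := by
      apply DifferentiableOn.diffContOnCl
      rwa [closure_ball (0 : ℂ) one_ne_zero]
    have hfront : ∀ u ∈ frontier (ball (0 : ℂ) 1), ‖f u‖ ≤ 1 := by
      intro u hu
      rw [frontier_ball (0 : ℂ) one_ne_zero, mem_sphere_zero_iff_norm] at hu
      have hu1 : Complex.abs u = 1 := hu
      have hne : (QQ c M t).eval u ≠ 0 := QQ_ne hc hroots ht0 ht1 hu1.le
      rw [hfdef]
      simp only [norm_div, Complex.norm_eq_abs, map_mul, map_pow, Complex.abs_ofReal,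
        abs_of_pos ht0]
      rw [div_le_one (Complex.abs.pos hne)]
      exact hbdry u hu1
    have hcl : w ∈ closure (ball (0 : ℂ) 1) := by
      rw [closure_ball (0 : ℂ) one_ne_zero, mem_closedBall_zero_iff]
      exact hw
    have hmm := Complex.norm_le_of_forall_mem_frontier_norm_le isBounded_ball hd hfront hcl
    have hne : (QQ c M t).eval w ≠ 0 := QQ_ne hc hroots ht0 ht1 hw
    rw [hfdef] at hmm
    simp only [norm_div, Complex.norm_eq_abs, map_mul, map_pow, Complex.abs_ofReal,
      abs_of_pos ht0] at hmm
    rw [div_le_one (Complex.abs.pos hne)] at hmm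
    exact hmm
  -- Step 2: limit t → 1
  have hlim : ∀ w : ℂ, Complex.abs w ≤ 1 → Complex.abs ((reflP n p).eval w)
      ≤ Complex.abs (c * (M.map (fun r => 1 - r * w)).prod) := by
    intro w hw
    set g : ℝ → ℝ := fun t => Complex.abs (c * (M.map (fun r => 1 - (t : ℂ) * (r * w))).prod)
        - t ^ n * Complex.abs ((reflP n p).eval w) with hgdef
    have hgc : Continuous g := by
      apply Continuous.sub
      · exact Complex.continuous_abs.comp
          (continuous_const.mul (cont_aux2 M (fun _ => 1) (fun r => r * w)))
      · exact (continuous_pow n).mul continuous_const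
    have hg1 : g 1 = Complex.abs (c * (M.map (fun r => 1 - r * w)).prod)
        - Complex.abs ((reflP n p).eval w) := by
      rw [hgdef]
      norm_num
    have hne : (nhdsWithin (1 : ℝ) (Set.Ioo 0 1)).NeBot :=
      right_nhdsWithin_Ioo_neBot (by norm_num)
    have htend : Filter.Tendsto g (nhdsWithin (1 : ℝ) (Set.Ioo 0 1)) (nhds (g 1)) :=
      (hgc.tendsto 1).mono_left nhdsWithin_le_nhds
    have hev : ∀ᶠ t in nhdsWithin (1 : ℝ) (Set.Ioo 0 1), 0 ≤ g t := by
      apply Filter.eventually_of_mem self_mem_nhdsWithin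
      intro t ht
      have := hstep t ht.1 ht.2 w hw
      simp only [hgdef]
      have heq : (M.map (fun r => 1 - (t : ℂ) * (r * w))).prod
          = (M.map (fun r => 1 - (t : ℂ) * r * w)).prod := by
        congr 1
        apply Multiset.map_congr rfl
        intro r _
        ring
      rw [heq, ← QQ_eval]
      linarith
    have h0 := ge_of_tendsto htend hev
    rw [hg1] at h0
    linarith
  constructor
  · intro z hz1
    have hz0 : z ≠ 0 := by
      intro h
      rw [h] at hz1
      simp only [map_zero] at hz1
      linarith
    have hzi0 : z⁻¹ ≠ 0 := inv_ne_zero hz0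
    have hzi : Complex.abs z⁻¹ ≤ 1 := by
      rw [map_inv₀]
      exact inv_le_one_of_one_le₀ hz1.le
    have h := hlim z⁻¹ hzi
    have e1 : Complex.abs ((reflP n p).eval z⁻¹)
        = (Complex.abs z)⁻¹ ^ n * Complex.abs (p.eval z) := by
      rw [reflP_eval hp hzi0, inv_inv, map_mul, map_pow, map_inv₀]
    have hid : (z : ℂ) ^ n * (c * (M.map (fun r => 1 - r * z⁻¹)).prod) = P.eval z := by
      rw [hPeval]
      have heq : M.map (fun r => z - r) = M.map (fun r => z * (1 - r * z⁻¹)) := by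
        apply Multiset.map_congr rfl
        intro r _
        field_simp
      rw [heq, prod_pull, hcard]
      ring
    have e2 : Complex.abs (c * (M.map (fun r => 1 - r * z⁻¹)).prod)
        = (Complex.abs z)⁻¹ ^ n * Complex.abs (P.eval z) := by
      have hzabs : (0 : ℝ) < Complex.abs z := lt_trans one_pos hz1
      have h5 := congrArg Complex.abs hid
      rw [map_mul, map_pow] at h5
      rw [← h5, ← mul_assoc]
      have h6 : (Complex.abs z)⁻¹ ^ n * Complex.abs z ^ n = 1 := by
        rw [← mul_pow, inv_mul_cancel₀ (ne_of_gt hzabs), one_pow]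
      rw [h6, one_mul]
    rw [e1, e2] at h
    have hpow : 0 < (Complex.abs z)⁻¹ ^ n := by
      have : 0 < Complex.abs z := by linarith
      positivity
    exact le_of_mul_le_mul_left (by linarith [h]) hpow
  · have h := hlim 0 (by simp)
    rw [reflP_eval_zero] at h
    have e3 : c * (M.map (fun r => 1 - r * 0)).prod = c := by
      simp
    rw [e3] at h
    have e4 : P.coeff n = c := by
      rw [hcdef, leadingCoeff, hP]
    rw [e4]
    exact h

private lemma main_aux : ∀ n : ℕ, ∀ P p : Polynomial ℂ, P.natDegree = n → P ≠ 0 →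
    (∀ z : ℂ, P.eval z = 0 → Complex.abs z ≤ 1) → p.natDegree ≤ n →
    (∀ w : ℂ, 1 < Complex.abs w → Complex.abs (p.eval w) ≤ Complex.abs (P.eval w)) →
    Complex.abs (p.coeff n) ≤ Complex.abs (P.coeff n) →
    ∀ a : ℂ, Complex.abs a ≤ 1 → ∀ z : ℂ, 1 < Complex.abs z →
      Complex.abs (Sop n a z p) ≤ Complex.abs (Sop n a z P) := by
  intro n
  induction n using Nat.strong_induction_on with
  | _ n ih =>
  intro P p hP hP0 hzeros hp hext hcoeff a ha z hz
  by_contra hcon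
  push_neg at hcon
  rcases Nat.eq_zero_or_pos n with hn0 | hn1
  · subst hn0
    obtain ⟨b, hb⟩ := Polynomial.natDegree_eq_zero.mp (Nat.le_zero.mp hp)
    have hd : derivative p = 0 := by rw [← hb, derivative_C]
    have h0 : Sop 0 a z p = 0 := by simp [Sop, hd]
    rw [h0] at hcon
    simp only [map_zero] at hcon
    exact absurd hcon (not_lt.mpr (Complex.abs.nonneg _))
  obtain ⟨m, rfl⟩ : ∃ m, n = m + 1 := ⟨n - 1, (Nat.succ_pred_eq_of_pos hn1).symm⟩
  set n := m + 1 with hndef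
  have hSp0 : Sop n a z p ≠ 0 := by
    intro h
    rw [h] at hcon
    simp only [map_zero] at hcon
    exact absurd hcon (not_lt.mpr (Complex.abs.nonneg _))
  set lam := Sop n a z P / Sop n a z p with hlamdef
  have hlamSp : lam * Sop n a z p = Sop n a z P := div_mul_cancel₀ _ hSp0
  have hlam : Complex.abs lam < 1 := by
    rw [hlamdef, map_div₀]
    rw [div_lt_one (Complex.abs.pos hSp0)]
    exact hcon
  set R := P - C lam * p with hRdef
  have hRcoeff : R.coeff n = P.coeff n - lam * p.coeff n := by
    rw [hRdef, coeff_sub, coeff_C_mul]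
  have hPcn : P.coeff n ≠ 0 := by
    rw [← hP]
    exact leadingCoeff_ne_zero.mpr hP0
  have hRc0 : R.coeff n ≠ 0 := by
    intro h
    have h1 : P.coeff n = lam * p.coeff n := by
      have := hRcoeff
      rw [h] at this
      linear_combination -this
    have h2 := congrArg Complex.abs h1
    rw [map_mul] at h2
    have h3 : 0 < Complex.abs (P.coeff n) := Complex.abs.pos hPcn
    nlinarith [Complex.abs.nonneg (p.coeff n), Complex.abs.nonneg lam]
  have hR0 : R ≠ 0 := by
    intro h
    rw [h] at hRc0
    simp at hRc0
  have hRdeg : R.natDegree = n := by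
    apply le_antisymm
    · rw [hRdef]
      apply le_trans (natDegree_sub_le _ _)
      apply max_le (le_of_eq hP)
      exact le_trans (natDegree_C_mul_le _ _) hp
    · exact le_natDegree_of_ne_zero hRc0
  have hRroots : ∀ w : ℂ, R.eval w = 0 → Complex.abs w ≤ 1 := by
    intro w hw
    by_contra hgt
    push_neg at hgt
    have hPw : P.eval w = lam * p.eval w := by
      rw [hRdef] at hw
      simp only [eval_sub, eval_mul, eval_C] at hw
      linear_combination hw
    have h1 := hext w hgt
    rcases eq_or_ne (p.eval w) 0 with hpw | hpw
    · rw [hpw, mul_zero] at hPw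
      exact absurd (hzeros w hPw) (not_le.mpr hgt)
    · have h2 := congrArg Complex.abs hPw
      rw [map_mul] at h2
      have h3 : 0 < Complex.abs (p.eval w) := Complex.abs.pos hpw
      nlinarith
  set Mr := R.roots with hMrdef
  have hMcard : Mr.card = n := by
    rw [hMrdef, ← hRdeg]
    exact splits_iff_card_roots.mp (IsAlgClosed.splits R)
  have hMroots : ∀ r ∈ Mr, Complex.abs r ≤ 1 := fun r hr => hRroots r (mem_roots'.mp hr).2
  have hRlc : R.leadingCoeff ≠ 0 := leadingCoeff_ne_zero.mpr hR0
  have hRfact : C R.leadingCoeff * (Mr.map (fun r => X - C r)).prod = R :=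
    C_leadingCoeff_mul_prod_multiset_X_sub_C (by rw [hMcard, hRdeg])
  have hSR : Sop n a z R = 0 := by
    have h1 : Sop n a z R = Sop n a z P - lam * Sop n a z p := by
      simp only [hRdef, Sop, derivative_sub, derivative_C_mul, eval_sub, eval_mul, eval_C]
      ring
    rw [h1, hlamSp, sub_self]
  obtain ⟨cpos, ceq⟩ := claimC a z ha hz Mr R.leadingCoeff hRlc hMroots
  rw [hMcard, hRfact] at ceq
  have hall : ∀ r ∈ Mr, 1 + a * r = 0 := by
    apply ceq
    rw [hSR]
    simp
  have hMne : ∃ ζ, ζ ∈ Mr := by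
    apply Multiset.exists_mem_of_ne_zero
    intro h
    rw [h] at hMcard
    simp [hndef] at hMcard
  obtain ⟨ζ, hζM⟩ := hMne
  have hζ : 1 + a * ζ = 0 := hall ζ hζM
  have hζabs1 : Complex.abs ζ ≤ 1 := hMroots ζ hζM
  have hζab : Complex.abs a * Complex.abs ζ = 1 := by
    have h1 : a * ζ = -1 := by linear_combination hζ
    have := congrArg Complex.abs h1
    rw [map_mul] at this
    simpa using this
  have hζ1 : Complex.abs ζ = 1 := by
    nlinarith [Complex.abs.nonneg a, Complex.abs.nonneg ζ]
  have hRζ : R.eval ζ = 0 := (mem_roots'.mp hζM).2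
  -- p(ζ) = 0 via a limiting argument from outside the disc
  have hpζ : p.eval ζ = 0 := by
    have key : ∀ s : ℝ, 1 < s → (1 - Complex.abs lam) * Complex.abs (p.eval ((s : ℂ) * ζ))
        ≤ Complex.abs (R.eval ((s : ℂ) * ζ)) := by
      intro s hs
      have habs : Complex.abs ((s : ℂ) * ζ) = s := by
        rw [map_mul, Complex.abs_ofReal, hζ1, mul_one, abs_of_pos (by linarith)]
      have h1 := hext _ (by rw [habs]; exact hs)
      have h2 : P.eval ((s : ℂ) * ζ) = lam * p.eval ((s : ℂ) * ζ) + R.eval ((s : ℂ) * ζ) := by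
        rw [hRdef]
        simp only [eval_sub, eval_mul, eval_C]
        ring
      have h3 := congrArg Complex.abs h2
      have h4 := Complex.abs.add_le (lam * p.eval ((s : ℂ) * ζ)) (R.eval ((s : ℂ) * ζ))
      rw [← h2, map_mul] at h4
      nlinarith [Complex.abs.nonneg (p.eval ((s : ℂ) * ζ)), hlam]
    have hcont : Filter.Tendsto
        (fun s : ℝ => Complex.abs (R.eval ((s : ℂ) * ζ))
          - (1 - Complex.abs lam) * Complex.abs (p.eval ((s : ℂ) * ζ)))
        (nhdsWithin 1 (Set.Ioi 1)) (nhds (Complex.abs (R.eval ζ)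
          - (1 - Complex.abs lam) * Complex.abs (p.eval ζ))) := by
      have hc : Continuous (fun s : ℝ => Complex.abs (R.eval ((s : ℂ) * ζ))
          - (1 - Complex.abs lam) * Complex.abs (p.eval ((s : ℂ) * ζ))) := by
        have hc0 : Continuous (fun s : ℝ => (s : ℂ) * ζ) :=
          Complex.continuous_ofReal.mul continuous_const
        exact (Complex.continuous_abs.comp (R.continuous.comp hc0)).sub
          (continuous_const.mul (Complex.continuous_abs.comp (p.continuous.comp hc0)))
      have h7 : Filter.Tendsto (fun s : ℝ => Complex.abs (R.eval ((s : ℂ) * ζ))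
          - (1 - Complex.abs lam) * Complex.abs (p.eval ((s : ℂ) * ζ)))
          (nhdsWithin (1 : ℝ) (Set.Ioi 1)) (nhds (Complex.abs (R.eval (((1 : ℝ) : ℂ) * ζ))
          - (1 - Complex.abs lam) * Complex.abs (p.eval (((1 : ℝ) : ℂ) * ζ)))) :=
        (hc.tendsto 1).mono_left nhdsWithin_le_nhds
      simpa using h7
    have hev : ∀ᶠ (s : ℝ) in nhdsWithin (1 : ℝ) (Set.Ioi 1), 0 ≤
        Complex.abs (R.eval ((s : ℂ) * ζ))
          - (1 - Complex.abs lam) * Complex.abs (p.eval ((s : ℂ) * ζ)) := by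
      apply Filter.eventually_of_mem self_mem_nhdsWithin
      intro s hs
      have := key s hs
      linarith
    have h0 := ge_of_tendsto hcont hev
    rw [hRζ, map_zero] at h0
    have : Complex.abs (p.eval ζ) ≤ 0 := by nlinarith [hlam, Complex.abs.nonneg (p.eval ζ)]
    exact Complex.abs.eq_zero.mp (le_antisymm this (Complex.abs.nonneg _))
  have hPζ : P.eval ζ = 0 := by
    have h1 : R.eval ζ = P.eval ζ - lam * p.eval ζ := by
      rw [hRdef]; simp [eval_sub, eval_mul, eval_C]
    rw [hRζ, hpζ, mul_zero, sub_zero] at h1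
    exact h1.symm
  obtain ⟨P₁, hP₁⟩ := dvd_iff_isRoot.mpr hPζ
  obtain ⟨p₁, hp₁⟩ := dvd_iff_isRoot.mpr hpζ
  have hXz : (X - C ζ : Polynomial ℂ) ≠ 0 := X_sub_C_ne_zero ζ
  have hP₁0 : P₁ ≠ 0 := by
    intro h
    rw [h, mul_zero] at hP₁
    exact hP0 hP₁
  have hp0 : p ≠ 0 := by
    intro h
    apply hSp0
    rw [h]
    simp [Sop]
  have hp₁0 : p₁ ≠ 0 := by
    intro h
    rw [h, mul_zero] at hp₁
    exact hp0 hp₁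
  have hdegP₁ : P₁.natDegree = m := by
    have h1 : P.natDegree = 1 + P₁.natDegree := by
      rw [hP₁, natDegree_mul hXz hP₁0, natDegree_X_sub_C]
    rw [hP] at h1
    omega
  have hdegp₁ : p₁.natDegree ≤ m := by
    have h1 : p.natDegree = 1 + p₁.natDegree := by
      rw [hp₁, natDegree_mul hXz hp₁0, natDegree_X_sub_C]
    omega
  have hzeros₁ : ∀ w : ℂ, P₁.eval w = 0 → Complex.abs w ≤ 1 := by
    intro w hw
    apply hzeros w
    rw [hP₁, eval_mul, hw, mul_zero]
  have hzζ : z ≠ ζ := by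
    intro h
    rw [h, hζ1] at hz
    exact lt_irrefl 1 hz
  have hext₁ : ∀ w : ℂ, 1 < Complex.abs w →
      Complex.abs (p₁.eval w) ≤ Complex.abs (P₁.eval w) := by
    intro w hw1
    have hwζ : 0 < Complex.abs (w - ζ) := by
      rw [Complex.abs.pos_iff, sub_ne_zero]
      intro h
      rw [h, hζ1] at hw1
      exact lt_irrefl 1 hw1
    have h1 := hext w hw1
    rw [hP₁, hp₁, eval_mul, eval_mul, map_mul, map_mul] at h1
    simp only [eval_sub, eval_X, eval_C] at h1
    exact le_of_mul_le_mul_left h1 hwζ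
  have hcoeffmul : ∀ q : Polynomial ℂ, q.natDegree ≤ m →
      ((X - C ζ) * q).coeff n = q.coeff m := by
    intro q hq
    rw [sub_mul, coeff_sub, coeff_C_mul, hndef, coeff_X_mul]
    have : q.coeff (m + 1) = 0 := coeff_eq_zero_of_natDegree_lt (by omega)
    rw [this, mul_zero, sub_zero]
  have hcoeff₁ : Complex.abs (p₁.coeff m) ≤ Complex.abs (P₁.coeff m) := by
    have e1 : p.coeff n = p₁.coeff m := by rw [hp₁, hcoeffmul p₁ hdegp₁]
    have e2 : P.coeff n = P₁.coeff m := by rw [hP₁, hcoeffmul P₁ (le_of_eq hdegP₁)]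
    rw [← e1, ← e2]
    exact hcoeff
  have hSp : Sop n a z p = (z - ζ) * Sop m a z p₁ := by
    rw [hp₁, hndef, Sfact' m a z ζ p₁ hζ]
  have hSP : Sop n a z P = (z - ζ) * Sop m a z P₁ := by
    rw [hP₁, hndef, Sfact' m a z ζ P₁ hζ]
  have hzζ' : 0 < Complex.abs (z - ζ) := by
    rw [Complex.abs.pos_iff, sub_ne_zero]
    exact hzζ
  have hstrict₁ : Complex.abs (Sop m a z P₁) < Complex.abs (Sop m a z p₁) := by
    rw [hSp, hSP, map_mul, map_mul] at hcon
    exact lt_of_mul_lt_mul_left hcon (le_of_lt hzζ')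
  exact absurd (ih m (by omega) P₁ p₁ hdegP₁ hP₁0 hzeros₁ hdegp₁ hext₁ hcoeff₁ a ha z hz)
    (not_le.mpr hstrict₁)

theorem stmt_7 (n : ℕ) (P p : Polynomial ℂ) (hP : P.natDegree = n)
    (hzeros : ∀ z : ℂ, P.eval z = 0 → ‖z‖ ≤ 1)
    (hp : p.natDegree ≤ n)
    (hle : ∀ z : ℂ, ‖z‖ = 1 → ‖p.eval z‖ ≤ ‖P.eval z‖)
    (a : ℂ) (ha : ‖a‖ ≤ 1) :
    ∀ z : ℂ, 1 ≤ ‖z‖ →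
      ‖(1 + a * z) * (derivative p).eval z - n * a * p.eval z‖ ≤
        ‖(1 + a * z) * (derivative P).eval z - n * a * P.eval z‖ := by
  simp only [Complex.norm_eq_abs] at hzeros hle ha ⊢
  intro z hz
  have hP0 : P ≠ 0 := by
    intro h
    have h2 := hzeros 2 (by rw [h]; simp)
    rw [show ((2 : ℂ)) = (((2 : ℝ)) : ℂ) by norm_num, Complex.abs_ofReal] at h2
    norm_num at h2
  obtain ⟨hext, hcoeff⟩ := ext_ineq n P p hP hP0 hzeros hp hle
  have main : ∀ w : ℂ, 1 < Complex.abs w →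
      Complex.abs (Sop n a w p) ≤ Complex.abs (Sop n a w P) :=
    fun w hw => main_aux n P p hP hP0 hzeros hp hext hcoeff a ha w hw
  have hSopdef : ∀ q : Polynomial ℂ, ∀ w : ℂ,
      Sop n a w q = (1 + a * w) * (derivative q).eval w - (n : ℂ) * a * q.eval w :=
    fun q w => rfl
  rw [← hSopdef p z, ← hSopdef P z]
  rcases lt_or_eq_of_le hz with hgt | heq
  · exact main z hgt
  · -- |z| = 1: limit from outside
    have hq : ∀ q : Polynomial ℂ, Continuous (fun w : ℂ => Sop n a w q) := by
      intro q
      simp only [Sop]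
      exact ((continuous_const.add (continuous_const.mul continuous_id)).mul
        (Polynomial.continuous _)).sub (continuous_const.mul (Polynomial.continuous _))
    have hc0 : Continuous (fun s : ℝ => (s : ℂ) * z) :=
      Complex.continuous_ofReal.mul continuous_const
    have hc : Continuous (fun s : ℝ => Complex.abs (Sop n a ((s : ℂ) * z) P)
        - Complex.abs (Sop n a ((s : ℂ) * z) p)) :=
      (Complex.continuous_abs.comp ((hq P).comp hc0)).sub
        (Complex.continuous_abs.comp ((hq p).comp hc0))
    have h7 : Filter.Tendsto (fun s : ℝ => Complex.abs (Sop n a ((s : ℂ) * z) P)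
        - Complex.abs (Sop n a ((s : ℂ) * z) p))
        (nhdsWithin (1 : ℝ) (Set.Ioi 1))
        (nhds (Complex.abs (Sop n a (((1 : ℝ) : ℂ) * z) P)
          - Complex.abs (Sop n a (((1 : ℝ) : ℂ) * z) p))) :=
      (hc.tendsto 1).mono_left nhdsWithin_le_nhds
    have hev : ∀ᶠ (s : ℝ) in nhdsWithin (1 : ℝ) (Set.Ioi 1),
        0 ≤ Complex.abs (Sop n a ((s : ℂ) * z) P) - Complex.abs (Sop n a ((s : ℂ) * z) p) := by
      apply Filter.eventually_of_mem self_mem_nhdsWithin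
      intro s hs
      have hs1 : (1 : ℝ) < s := hs
      have habs : 1 < Complex.abs ((s : ℂ) * z) := by
        rw [map_mul, Complex.abs_ofReal, ← heq, mul_one, abs_of_pos (by linarith)]
        exact hs1
      have := main _ habs
      linarith
    have h0 := ge_of_tendsto h7 hev
    have hone : (((1 : ℝ) : ℂ) * z) = z := by norm_num
    rw [hone] at h0
    linarith
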